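/- Iteration step in the good-λ argument: under the hypothesis ℙ_B(g > λ + ν) ≤ [η + V(g>λ, ν)]·ℙ_B(g > λ) for all λ,ν > 0, where η ∈ (0,1) and V is monotone in the sense that V(C₁,ν)ℙ_B(C₁) ≤ V(C₂,ν)ℙ_B(C₂) for C₁ ⊆ C₂, one obtains ℙ_B(g > λ + Nν) ≤ [η^N + V(g>λ,ν)·∑_{k=1}^N η^{k−1}]·ℙ_B(g > λ) for every N ∈ ℕ. -/
import Mathlib


open MeasureTheory

/-- Iteration step in the good-λ argument: from the one-step estimate
`ℙ_B(g > λ + ν) ≤ [η + V(g>λ, ν)]·ℙ_B(g > λ)` (for all `λ, ν > 0`), with `η ∈ (0,1)`,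
`V ≥ 0` monotone in the sense `C₁ ⊆ C₂ → V(C₁,ν)ℙ_B(C₁) ≤ V(C₂,ν)ℙ_B(C₂)`, one deduces
`ℙ_B(g > λ + Nν) ≤ [η^N + V(g>λ,ν)·∑_{k=1}^N η^{k−1}]·ℙ_B(g > λ)` for every `N ∈ ℕ`. -/
theorem good_lambda_iteration
    {Ω : Type*} [MeasurableSpace Ω] (PB : Measure Ω) [IsProbabilityMeasure PB]
    (g : Ω → ℝ) (hg : ∀ ω, 0 ≤ g ω)
    (η : ℝ) (hη0 : 0 < η) (hη1 : η < 1)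
    (V : Set Ω → ℝ → ℝ) (hV0 : ∀ C ν, 0 ≤ V C ν)
    (hVmono : ∀ (C₁ C₂ : Set Ω) (ν : ℝ), C₁ ⊆ C₂ →
      V C₁ ν * (PB C₁).toReal ≤ V C₂ ν * (PB C₂).toReal)
    (hstep : ∀ lam ν : ℝ, 0 < lam → 0 < ν →
      (PB {ω | lam + ν < g ω}).toReal ≤
        (η + V {ω | lam < g ω} ν) * (PB {ω | lam < g ω}).toReal) :
    ∀ (N : ℕ) (lam ν : ℝ), 0 < lam → 0 < ν →
      (PB {ω | lam + N * ν < g ω}).toReal ≤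
        (η ^ N + V {ω | lam < g ω} ν * ∑ k ∈ Finset.range N, η ^ k) *
          (PB {ω | lam < g ω}).toReal := by
  intro N
  induction N with
  | zero =>
    intro lam ν hl hν
    simp
  | succ N ih =>
    intro lam ν hl hν
    have hNν : (0:ℝ) ≤ (N:ℝ) * ν := by positivity
    have hsub : {ω | lam + (N:ℝ) * ν < g ω} ⊆ {ω | lam < g ω} := by
      intro ω h
      simp only [Set.mem_setOf_eq] at h ⊢
      linarith
    have hseteq : {ω | lam + ((N:ℕ)+1 : ℕ) * ν < g ω}
        = {ω | (lam + (N:ℝ) * ν) + ν < g ω} := by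
      ext ω; simp only [Set.mem_setOf_eq]; push_cast; constructor <;> intro h <;> linarith
    have h1 := hstep (lam + (N:ℝ) * ν) ν (by linarith) hν
    have h2 := hVmono {ω | lam + (N:ℝ) * ν < g ω} {ω | lam < g ω} ν hsub
    have h3 := ih lam ν hl hν
    have hPN : (0:ℝ) ≤ (PB {ω | lam + (N:ℝ) * ν < g ω}).toReal := ENNReal.toReal_nonneg
    have hPA : (0:ℝ) ≤ (PB {ω | lam < g ω}).toReal := ENNReal.toReal_nonneg
    rw [hseteq]
    have h4 : η * (PB {ω | lam + (N:ℝ) * ν < g ω}).toReal ≤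
        η * ((η ^ N + V {ω | lam < g ω} ν * ∑ k ∈ Finset.range N, η ^ k) *
          (PB {ω | lam < g ω}).toReal) :=
      mul_le_mul_of_nonneg_left h3 hη0.le
    calc (PB {ω | lam + (N:ℝ) * ν + ν < g ω}).toReal
        ≤ (η + V {ω | lam + (N:ℝ) * ν < g ω} ν) *
            (PB {ω | lam + (N:ℝ) * ν < g ω}).toReal := h1
      _ = η * (PB {ω | lam + (N:ℝ) * ν < g ω}).toReal +
            V {ω | lam + (N:ℝ) * ν < g ω} ν *
              (PB {ω | lam + (N:ℝ) * ν < g ω}).toReal := by ring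
      _ ≤ η * ((η ^ N + V {ω | lam < g ω} ν * ∑ k ∈ Finset.range N, η ^ k) *
            (PB {ω | lam < g ω}).toReal) +
            V {ω | lam < g ω} ν * (PB {ω | lam < g ω}).toReal := add_le_add h4 h2
      _ = (η ^ (N + 1) + V {ω | lam < g ω} ν *
            ∑ k ∈ Finset.range (N + 1), η ^ k) * (PB {ω | lam < g ω}).toReal := by
          rw [geom_sum_succ]; ring
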